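/- Let g : [-1,1] → ℝ be nonnegative, increasing and concave on [-1,1], with h(s) = g(s)/(1+s) convex on (-1,1). Then for all -1 ≤ x < t ≤ 1, writing x̄ = (∫_x^t s·(1+s)/√(1-s²) ds)/(∫_x^t (1+s)/√(1-s²) ds) for the mean of s with respect to the weight (1+s)/√(1-s²) on [x,t], one has h(x̄) ≥ (1/2)·h((x+t)/2). -/

import Mathlib

open Real MeasureTheory Set intervalIntegral

noncomputable def W (s : ℝ) : ℝ := (1 + s) / Real.sqrt (1 - s ^ 2)

lemma W_def (s : ℝ) : W s = (1 + s) / Real.sqrt (1 - s ^ 2) := rfl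

lemma W_nonneg {s : ℝ} (h : -1 ≤ s) : 0 ≤ W s :=
  div_nonneg (by linarith) (Real.sqrt_nonneg _)

lemma W_pos {s : ℝ} (h1 : -1 < s) (h2 : s < 1) : 0 < W s := by
  apply div_pos (by linarith)
  apply Real.sqrt_pos.mpr; nlinarith

lemma W_mono {a b : ℝ} (ha : -1 ≤ a) (hab : a ≤ b) (hb : b < 1) : W a ≤ W b := by
  rcases eq_or_lt_of_le ha with h | h
  · have : W a = 0 := by rw [W_def, ← h]; norm_num
    rw [this]
    exact W_nonneg (by linarith)
  · have ha2 : (0:ℝ) < 1 - a ^ 2 := by nlinarith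
    have hb2 : (0:ℝ) < 1 - b ^ 2 := by nlinarith
    rw [W_def, W_def, div_le_div_iff₀ (Real.sqrt_pos.mpr ha2) (Real.sqrt_pos.mpr hb2)]
    have h1 : (1 + a) * Real.sqrt (1 - b ^ 2) = Real.sqrt ((1 + a) ^ 2 * (1 - b ^ 2)) := by
      rw [Real.sqrt_mul (by positivity), Real.sqrt_sq (by linarith)]
    have h2 : (1 + b) * Real.sqrt (1 - a ^ 2) = Real.sqrt ((1 + b) ^ 2 * (1 - a ^ 2)) := by
      rw [Real.sqrt_mul (by positivity), Real.sqrt_sq (by linarith)]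
    rw [h1, h2]
    apply Real.sqrt_le_sqrt
    nlinarith [mul_nonneg (mul_nonneg (by linarith : (0:ℝ) ≤ 1 + a)
      (by linarith : (0:ℝ) ≤ 1 + b)) (by linarith : (0:ℝ) ≤ b - a)]

lemma W_le {s : ℝ} (h1 : -1 < s) (h2 : s ≤ 1) :
    W s ≤ Real.sqrt 2 * (1 - s) ^ (-1/2 : ℝ) := by
  rcases eq_or_lt_of_le h2 with h | h
  · subst h
    norm_num [W_def, Real.zero_rpow, Real.sqrt_zero]
  · have hs1 : (0:ℝ) < 1 - s := by linarith
    have hs2 : (0:ℝ) < 1 - s ^ 2 := by nlinarith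
    have hrw : (1 - s) ^ (-1/2 : ℝ) = (Real.sqrt (1 - s))⁻¹ := by
      rw [show (-1/2 : ℝ) = -(1/2) by norm_num, Real.rpow_neg hs1.le, ← Real.sqrt_eq_rpow]
    rw [W_def, hrw, ← div_eq_mul_inv,
      div_le_div_iff₀ (Real.sqrt_pos.mpr hs2) (Real.sqrt_pos.mpr hs1)]
    have e1 : (1 + s) * Real.sqrt (1 - s) = Real.sqrt ((1 + s) ^ 2 * (1 - s)) := by
      rw [Real.sqrt_mul (by positivity), Real.sqrt_sq (by linarith)]
    have e2 : Real.sqrt 2 * Real.sqrt (1 - s ^ 2) = Real.sqrt (2 * (1 - s ^ 2)) := by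
      rw [Real.sqrt_mul (by norm_num)]
    rw [e1, e2]
    apply Real.sqrt_le_sqrt
    nlinarith [mul_pos hs2 hs1]

lemma bound_integrable (a b : ℝ) :
    IntervalIntegrable (fun s => Real.sqrt 2 * (1 - s) ^ (-1/2 : ℝ)) volume a b := by
  have h : IntervalIntegrable (fun u : ℝ => u ^ (-1/2 : ℝ)) volume (1 - a) (1 - b) :=
    intervalIntegrable_rpow' (by norm_num)
  have h2 := (h.comp_sub_left 1).const_mul (Real.sqrt 2)
  simpa using h2

lemma W_measurable : Measurable W := by
  apply Measurable.div
  · fun_prop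
  · exact (measurable_const.sub (measurable_id.pow_const 2)).sqrt

lemma W_integrable {a b : ℝ} (ha : -1 ≤ a) (hab : a ≤ b) (hb : b ≤ 1) :
    IntervalIntegrable W volume a b := by
  apply (bound_integrable a b).mono_fun
    (W_measurable.aestronglyMeasurable)
  rw [Filter.EventuallyLE, ae_restrict_iff' measurableSet_uIoc]
  filter_upwards with s hs
  rw [uIoc_of_le hab] at hs
  have h1 : -1 < s := lt_of_le_of_lt ha hs.1
  have h2 : s ≤ 1 := le_trans hs.2 hb
  simp only [Real.norm_eq_abs]
  rw [abs_of_nonneg (W_nonneg h1.le),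
    abs_of_nonneg (mul_nonneg (Real.sqrt_nonneg 2) (Real.rpow_nonneg (by linarith) _))]
  exact W_le h1 h2

lemma sW_integrable {a b : ℝ} (ha : -1 ≤ a) (hab : a ≤ b) (hb : b ≤ 1) :
    IntervalIntegrable (fun s => s * W s) volume a b := by
  apply (bound_integrable a b).mono_fun
    ((measurable_id.mul W_measurable).aestronglyMeasurable)
  rw [Filter.EventuallyLE, ae_restrict_iff' measurableSet_uIoc]
  filter_upwards with s hs
  rw [uIoc_of_le hab] at hs
  have h1 : -1 < s := lt_of_le_of_lt ha hs.1
  have h2 : s ≤ 1 := le_trans hs.2 hb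
  simp only [Real.norm_eq_abs, Pi.mul_apply, id]
  rw [abs_of_nonneg (mul_nonneg (Real.sqrt_nonneg 2) (Real.rpow_nonneg (by linarith) _)), abs_mul,
    abs_of_nonneg (W_nonneg h1.le)]
  have hsabs : |s| ≤ 1 := abs_le.mpr ⟨h1.le, h2⟩
  calc |s| * W s ≤ 1 * W s := by
        exact mul_le_mul_of_nonneg_right hsabs (W_nonneg h1.le)
    _ = W s := one_mul _
    _ ≤ _ := W_le h1 h2

theorem stmt_5 (g : ℝ → ℝ)
    (hg0 : ∀ x ∈ Set.Icc (-1:ℝ) 1, 0 ≤ g x)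
    (hgmono : MonotoneOn g (Set.Icc (-1:ℝ) 1))
    (hgconc : ConcaveOn ℝ (Set.Icc (-1:ℝ) 1) g)
    (hgconv : ConvexOn ℝ (Set.Ioo (-1:ℝ) 1) (fun s => g s / (1 + s)))
    (x t : ℝ) (hx : -1 ≤ x) (hxt : x < t) (ht : t ≤ 1) :
    (1 / 2) * (g ((x + t) / 2) / (1 + (x + t) / 2)) ≤
      (fun s => g s / (1 + s))
        ((∫ s in x..t, s * (1 + s) / Real.sqrt (1 - s ^ 2)) /
         (∫ s in x..t, (1 + s) / Real.sqrt (1 - s ^ 2))) := by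
  have hrw1 : ∀ s : ℝ, s * (1 + s) / Real.sqrt (1 - s ^ 2) = s * W s := fun s => by
    rw [W_def]; ring
  have hrw2 : ∀ s : ℝ, (1 + s) / Real.sqrt (1 - s ^ 2) = W s := fun s => rfl
  simp only [hrw1, hrw2]
  set m : ℝ := (x + t) / 2 with hm
  have hxm : x ≤ m := by rw [hm]; linarith
  have hmt : m ≤ t := by rw [hm]; linarith
  have htneg : -1 < t := lt_of_le_of_lt hx hxt
  have hmneg : -1 < m := by rw [hm]; linarith
  have hW : IntervalIntegrable W volume x t := W_integrable hx hxt.le ht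
  have hsW : IntervalIntegrable (fun s => s * W s) volume x t := sW_integrable hx hxt.le ht
  set I0 : ℝ := ∫ s in x..t, W s with hI0
  set I1 : ℝ := ∫ s in x..t, s * W s with hI1
  have hI0pos : 0 < I0 := by
    apply intervalIntegral_pos_of_pos_on hW _ hxt
    intro s hs
    exact W_pos (lt_of_le_of_lt hx hs.1) (lt_of_lt_of_le hs.2 ht)
  -- upper bound: I1 ≤ t * I0
  have hup : I1 ≤ t * I0 := by
    have h0 : 0 ≤ ∫ s in x..t, (t * W s - s * W s) := by
      apply integral_nonneg hxt.le
      intro u hu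
      have : 0 ≤ (t - u) * W u :=
        mul_nonneg (by linarith [hu.2]) (W_nonneg (by linarith [hu.1]))
      linarith [this, (by ring : (t - u) * W u = t * W u - u * W u)]
    rw [integral_sub (hW.const_mul t) hsW, intervalIntegral.integral_const_mul] at h0
    linarith
  -- lower bound: m * I0 ≤ I1
  have hlo : m * I0 ≤ I1 := by
    set F : ℝ → ℝ := fun s => (s - m) * W s with hF
    have hFint : IntervalIntegrable F volume x t := by
      have h := hsW.sub (hW.const_mul m)
      have : F = fun s => s * W s - m * W s := by funext s; rw [hF]; ring
      rw [this]; exact h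
    have hF1 : IntervalIntegrable F volume x m :=
      hFint.mono_set (uIcc_subset_uIcc left_mem_uIcc (mem_uIcc.mpr (Or.inl ⟨hxm, hmt⟩)))
    have hF2 : IntervalIntegrable F volume m t :=
      hFint.mono_set (uIcc_subset_uIcc (mem_uIcc.mpr (Or.inl ⟨hxm, hmt⟩)) right_mem_uIcc)
    have hmx : 2 * m - x = t := by rw [hm]; ring
    have hmm : 2 * m - m = m := by ring
    have hmt' : 2 * m - t = x := by rw [hm]; ring
    have hG : IntervalIntegrable (fun s => F (2 * m - s)) volume m t := by
      have h := hF1.comp_sub_left (2 * m)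
      rw [hmx, hmm] at h
      exact h.symm
    have e1 : (∫ s in x..m, F s) = ∫ s in m..t, F (2 * m - s) := by
      rw [integral_comp_sub_left F (2 * m), hmt', hmm]
    have key : 0 ≤ ∫ s in x..t, F s := by
      rw [← integral_add_adjacent_intervals hF1 hF2, e1, ← integral_add hG hF2]
      apply integral_nonneg_of_ae_restrict hmt
      have hnet : ∀ᵐ s : ℝ, s ≠ t := by
        rw [MeasureTheory.ae_iff]
        have hset : {a : ℝ | ¬ a ≠ t} = {t} := by ext a; simp
        rw [hset]
        exact Real.volume_singleton
      rw [Filter.EventuallyLE, ae_restrict_iff' measurableSet_Icc]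
      filter_upwards [hnet] with s hsnet hs
      have hs1 : s < 1 := lt_of_lt_of_le (lt_of_le_of_ne hs.2 hsnet) ht
      have hws : W (2 * m - s) ≤ W s := by
        apply W_mono _ (by linarith [hs.1]) hs1
        have : x ≤ 2 * m - s := by rw [hm]; linarith [hs.2]
        linarith
      have hsm : 0 ≤ s - m := by linarith [hs.1]
      simp only [hF, Pi.zero_apply]
      nlinarith
    have : (∫ s in x..t, F s) = I1 - m * I0 := by
      have hFeq : F = fun s => s * W s - m * W s := by funext s; rw [hF]; ring
      rw [hFeq, integral_sub hsW (hW.const_mul m), intervalIntegral.integral_const_mul]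
    linarith [key, this]
  -- conclude
  set xb : ℝ := I1 / I0 with hxb
  have hmx : m ≤ xb := by rw [hxb, le_div_iff₀ hI0pos]; exact hlo
  have hxbt : xb ≤ t := by rw [hxb, div_le_iff₀ hI0pos]; exact hup
  have hxbmem : xb ∈ Set.Icc (-1:ℝ) 1 := ⟨by linarith, by linarith⟩
  have hmmem : m ∈ Set.Icc (-1:ℝ) 1 := ⟨by linarith, by linarith⟩
  have hgm : g m ≤ g xb := hgmono hmmem hxbmem hmx
  have hg0m : 0 ≤ g m := hg0 m hmmem
  have h1m : 0 < 1 + m := by linarith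
  have h1xb : 0 < 1 + xb := by linarith
  have hden : 1 + xb ≤ 2 * (1 + m) := by rw [hm]; linarith
  show (1 / 2) * (g m / (1 + m)) ≤ g xb / (1 + xb)
  calc (1 / 2) * (g m / (1 + m)) = 1 * g m / (2 * (1 + m)) := div_mul_div_comm 1 2 (g m) (1 + m)
    _ = g m / (2 * (1 + m)) := by rw [one_mul]
    _ ≤ g m / (1 + xb) := div_le_div_of_nonneg_left hg0m h1xb hden
    _ ≤ g xb / (1 + xb) := by gcongr
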